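/- If p ≥ 3, n > 3p/(p-1), μ_ν < (2p-1)n/(3p) for all ν, and nd ≥ Σ_ν μ_ν s_ν with d a positive integer and s_ν nonnegative integers, then [(p-1)n-3p]d - Σ_ν[(p-1)μ_ν-(2p-1)]s_ν > 0. -/

import Mathlib

open Finset

/-- The key numerical step in the Nakai–Moishezon ampleness verification.
If `p ≥ 3`, `n > 3p/(p-1)`, `μ_ν < (2p-1)n/(3p)` for all `ν` (with the `μ_ν`
positive integers), `d` is a positive integer, the `s_ν` are nonnegative
integers, and `n·d ≥ Σ_ν μ_ν s_ν`, then
`[(p-1)n - 3p]·d - Σ_ν [(p-1)μ_ν - (2p-1)]·s_ν > 0`. -/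
theorem stmt14 (p n m : ℕ) (hp : 3 ≤ p)
    (hn : (n : ℚ) > 3 * p / ((p : ℚ) - 1))
    (μ : Fin m → ℕ) (hμpos : ∀ ν, 0 < μ ν)
    (hμ : ∀ ν, (μ ν : ℚ) < (2 * (p : ℚ) - 1) * n / (3 * p))
    (d : ℕ) (hd : 0 < d) (s : Fin m → ℕ)
    (hsum : (n : ℚ) * d ≥ ∑ ν, (μ ν : ℚ) * s ν) :
    0 < (((p : ℚ) - 1) * n - 3 * p) * d -
      ∑ ν, (((p : ℚ) - 1) * μ ν - (2 * p - 1)) * s ν := by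
  have hpq : (3 : ℚ) ≤ p := by exact_mod_cast hp
  have hp1 : (0 : ℚ) < (p : ℚ) - 1 := by linarith
  have hn' : 3 * (p : ℚ) < n * ((p : ℚ) - 1) := by
    have := (div_lt_iff₀ hp1).mp hn
    linarith
  have hn0 : (0 : ℚ) < n := by nlinarith
  have hdq : (1 : ℚ) ≤ d := by exact_mod_cast hd
  have hcpos : (0 : ℚ) < ((p : ℚ) - 1) * n - 3 * p := by nlinarith
  set c : ℚ := (((p : ℚ) - 1) * n - 3 * p) / n with hc
  have hc0 : 0 < c := div_pos hcpos hn0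
  -- termwise strict inequality on coefficients
  have hterm : ∀ ν, ((p : ℚ) - 1) * μ ν - (2 * p - 1) < c * μ ν := by
    intro ν
    have h3p : (0 : ℚ) < 3 * p := by linarith
    have hμν : 3 * (p : ℚ) * μ ν < (2 * p - 1) * n := by
      have := (lt_div_iff₀ h3p).mp (hμ ν)
      linarith
    rw [hc, div_mul_eq_mul_div, lt_div_iff₀ hn0]
    nlinarith
  by_cases hall : ∀ ν, s ν = 0
  · have : ∑ ν, (((p : ℚ) - 1) * μ ν - (2 * p - 1)) * s ν = 0 := by
      apply Finset.sum_eq_zero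
      intro ν _
      rw [hall ν]; simp
    rw [this]
    nlinarith
  · push_neg at hall
    obtain ⟨ν₀, hν₀⟩ := hall
    have hsν₀ : (0 : ℚ) < s ν₀ := by
      exact_mod_cast Nat.pos_of_ne_zero hν₀
    have hlt : ∑ ν, (((p : ℚ) - 1) * μ ν - (2 * p - 1)) * s ν
        < ∑ ν, c * ((μ ν : ℚ) * s ν) := by
      refine Finset.sum_lt_sum (fun ν _ => ?_) ⟨ν₀, Finset.mem_univ ν₀, by nlinarith [hterm ν₀]⟩
      have hs : (0 : ℚ) ≤ s ν := by positivity
      nlinarith [hterm ν]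
    rw [← Finset.mul_sum] at hlt
    have h2 : c * (∑ ν, (μ ν : ℚ) * s ν) ≤ c * (n * d) :=
      mul_le_mul_of_nonneg_left hsum hc0.le
    have h3 : c * (n * d) = (((p : ℚ) - 1) * n - 3 * p) * d := by
      rw [hc, div_mul_eq_mul_div, div_eq_iff hn0.ne']
      ring
    linarith
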